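/- arXiv:0806.2276 — 6 statements merged into one kernel-verified Lean document; each statement's English description precedes it below -/
import Mathlib

section
/- The map φ(z) = Az/(Cz+1), where A and C are complex numbers, maps the open unit disk into itself if and only if |A| + |C| ≤ 1. -/
open Complex

theorem lft_self_map_special (A C : ℂ) :
    (∀ z : ℂ, ‖z‖ < 1 →
        C * z + 1 ≠ 0 ∧ ‖A * z / (C * z + 1)‖ < 1) ↔
      ‖A‖ + ‖C‖ ≤ 1 := by
  constructor
  · intro h
    by_contra hc
    push_neg at hc
    by_cases hC1 : 1 < ‖C‖
    · have hC0 : C ≠ 0 := by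
        intro h0; simp [h0] at hC1; linarith
      have hz : ‖-(1/C)‖ < 1 := by
        rw [norm_neg, norm_div, norm_one, div_lt_one (by positivity)]
        exact hC1
      exact (h _ hz).1 (by field_simp; ring)
    · push_neg at hC1
      have hA : 0 < ‖A‖ := by
        have := norm_nonneg C
        by_contra h0
        push_neg at h0
        have : ‖A‖ = 0 := le_antisymm h0 (norm_nonneg A)
        linarith
      set r : ℝ := 1 / (‖A‖ + ‖C‖) with hr
      have hpos : 0 < ‖A‖ + ‖C‖ := by positivity
      have hr0 : 0 < r := by positivity
      have hr1 : r < 1 := by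
        rw [hr, div_lt_one hpos]; linarith
      have hrC : r * ‖C‖ < 1 := by
        have : r * ‖C‖ < r * (‖A‖ + ‖C‖) := by
          apply mul_lt_mul_of_pos_left _ hr0
          linarith
        rw [hr] at this
        rw [hr]
        calc 1 / (‖A‖ + ‖C‖) * ‖C‖
            < 1 / (‖A‖ + ‖C‖) * (‖A‖ + ‖C‖) := this
          _ = 1 := by field_simp
      by_cases hC : C = 0
      · have hz : ‖(r : ℂ)‖ < 1 := by
          simpa [Complex.norm_real, Real.norm_eq_abs, abs_of_pos hr0] using hr1
        have h2 := (h _ hz).2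
        rw [hC] at h2
        simp only [zero_mul, zero_add, div_one, norm_mul, Complex.norm_real, Real.norm_eq_abs,
          abs_of_pos hr0] at h2
        have : ‖A‖ * r = 1 := by
          rw [hr, hC] at *
          simp [hC] at hc ⊢
          field_simp
        linarith
      · have hCpos : 0 < ‖C‖ := norm_pos_iff.mpr hC
        set z : ℂ := -(r : ℂ) * (starRingEnd ℂ C) / (‖C‖ : ℂ) with hzdef
        have hzabs : ‖z‖ = r := by
          rw [hzdef]
          rw [norm_div, norm_mul, norm_neg, Complex.norm_real, Complex.norm_real, Real.norm_eq_abs, Real.norm_eq_abs,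
            Complex.norm_conj, abs_of_pos hr0, abs_of_pos hCpos]
          field_simp
        have hCz : C * z + 1 = ((1 - r * ‖C‖ : ℝ) : ℂ) := by
          have h1 : C * (starRingEnd ℂ C) = ((‖C‖ : ℝ) : ℂ) ^ 2 := by
            rw [Complex.mul_conj]
            norm_cast
            exact (Complex.sq_norm C).symm
          have hC0 : ((‖C‖ : ℝ) : ℂ) ≠ 0 := by
            exact_mod_cast hCpos.ne'
          rw [hzdef]
          field_simp
          push_cast
          linear_combination (-(r : ℂ)) * h1
        have hz1 : ‖z‖ < 1 := by rw [hzabs]; exact hr1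
        have h2 := (h z hz1).2
        rw [hCz] at h2
        rw [norm_div, norm_mul, hzabs, Complex.norm_real, Real.norm_eq_abs,
          abs_of_pos (by linarith : (0:ℝ) < 1 - r * ‖C‖)] at h2
        rw [div_lt_one (by linarith)] at h2
        have : r * (‖A‖ + ‖C‖) < 1 := by nlinarith
        rw [hr] at this
        field_simp at this
        exact lt_irrefl _ this
  · intro h z hz
    have hden : ‖A‖ * ‖z‖ < 1 - ‖C‖ * ‖z‖ := by
      have h1 : (‖A‖ + ‖C‖) * ‖z‖ < 1 := by
        rcases eq_or_lt_of_le (norm_nonneg z) with h0 | h0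
        · rw [← h0]; simp
        · calc (‖A‖ + ‖C‖) * ‖z‖ ≤ 1 * ‖z‖ := by
                apply mul_le_mul_of_nonneg_right h (le_of_lt h0)
            _ = ‖z‖ := one_mul _
            _ < 1 := hz
      nlinarith
    have h0 : 0 < 1 - ‖C‖ * ‖z‖ := by
      have := mul_nonneg (norm_nonneg A) (norm_nonneg z)
      linarith
    have hCz : 1 - ‖C‖ * ‖z‖ ≤ ‖C * z + 1‖ := by
      calc 1 - ‖C‖ * ‖z‖ = ‖(1 : ℂ)‖ - ‖C * z‖ := by
            rw [norm_one, norm_mul]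
        _ ≤ ‖C * z + 1‖ := by
            have := norm_add_le (C * z + 1) (-(C * z))
            simp at this
            rw [norm_one, norm_mul]
            linarith
    have hne : C * z + 1 ≠ 0 := by
      intro h0
      rw [h0, norm_zero] at hCz
      linarith
    refine ⟨hne, ?_⟩
    rw [norm_div, norm_mul, div_lt_one (by
      have := norm_pos_iff.mpr hne; linarith)]
    calc ‖A‖ * ‖z‖ < 1 - ‖C‖ * ‖z‖ := hden
      _ ≤ ‖C * z + 1‖ := hCz
end

section
/- Let λ, μ ∈ ℂ with |λ| = |μ| = 1, and suppose λⁿ ≠ 1 for every positive integer n. Let h : 𝔻 → ℂ be holomorphic, h ≢ 0, with h(0) = 0 and h(λz) = μh(z) for all z ∈ 𝔻. Then there exist a positive integer n₀ and a nonzero complex number β such that h(z) = βz^{n₀} for all z ∈ 𝔻. -/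
open Complex

private lemma radius_le_of_norm_eq {p q : FormalMultilinearSeries ℂ ℂ ℂ}
    (h : ∀ n, ‖q n‖ = ‖p n‖) : p.radius ≤ q.radius := by
  refine ENNReal.le_of_forall_nnreal_lt fun r hr => ?_
  obtain ⟨C, _, hb⟩ := p.norm_mul_pow_le_of_lt_radius hr
  exact q.le_radius_of_bound C fun n => by rw [h]; exact hb n

theorem monomial_form (lam mu : ℂ)
    (hlam : ‖lam‖ = 1) (hmu : ‖mu‖ = 1)
    (hroot : ∀ n : ℕ, 0 < n → lam ^ n ≠ 1)
    (h : ℂ → ℂ) (hdiff : DifferentiableOn ℂ h {z : ℂ | ‖z‖ < 1})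
    (h0 : h 0 = 0)
    (heq : ∀ z : ℂ, ‖z‖ < 1 → h (lam * z) = mu * h z)
    (hnz : ¬ ∀ z : ℂ, ‖z‖ < 1 → h z = 0) :
    ∃ (n₀ : ℕ) (β : ℂ), 0 < n₀ ∧ β ≠ 0 ∧
      ∀ z : ℂ, ‖z‖ < 1 → h z = β * z ^ n₀ := by
  have hlam' : ‖lam‖ = 1 := by exact hlam
  have hmu' : ‖mu‖ = 1 := by exact hmu
  have hball : {z : ℂ | ‖z‖ < 1} = Metric.ball (0 : ℂ) 1 := by
    ext z; simp [Metric.mem_ball, Complex.dist_eq]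
  -- power series on closed ball of radius 1/2
  set r : NNReal := 2⁻¹ with hr
  have hsub : Metric.closedBall (0 : ℂ) (r : ℝ) ⊆ {z : ℂ | ‖z‖ < 1} := by
    intro z hz
    simp only [Metric.mem_closedBall, Complex.dist_eq, sub_zero] at hz
    simp only [Set.mem_setOf_eq]
    calc ‖z‖ ≤ (r : ℝ) := hz
    _ < 1 := by norm_num [hr]
  have hd2 : DifferentiableOn ℂ h (Metric.closedBall (0 : ℂ) (r : ℝ)) := hdiff.mono hsub
  have hrpos : (0 : NNReal) < r := by norm_num [hr]
  have hp : HasFPowerSeriesOnBall h (cauchyPowerSeries h 0 r) 0 r :=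
    hd2.hasFPowerSeriesOnBall hrpos
  set p := cauchyPowerSeries h 0 r with hpdef
  -- membership lemma
  have hmem : ∀ z : ℂ, ‖z‖ < (r : ℝ) → z ∈ Metric.eball (0 : ℂ) (r : ENNReal) := by
    intro z hz
    rw [Metric.mem_eball, edist_zero_right, enorm_eq_nnnorm, ← ENNReal.coe_lt_coe.symm]
    · exact_mod_cast (by rw [← NNReal.coe_lt_coe, coe_nnnorm]; exact hz : ‖z‖₊ < r)
  -- the two auxiliary series
  set q1 : FormalMultilinearSeries ℂ ℂ ℂ := fun n => lam ^ n • p n with hq1def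
  set q2 : FormalMultilinearSeries ℂ ℂ ℂ := fun n => mu • p n with hq2def
  have hnorm1 : ∀ n, ‖q1 n‖ = ‖p n‖ := by
    intro n
    have hcq : q1.coeff n = lam ^ n * p.coeff n := by
      simp only [hq1def, FormalMultilinearSeries.coeff, ContinuousMultilinearMap.smul_apply,
        smul_eq_mul]
    rw [FormalMultilinearSeries.norm_apply_eq_norm_coef,
      FormalMultilinearSeries.norm_apply_eq_norm_coef, hcq, norm_mul, norm_pow, hlam',
      one_pow, one_mul]
  have hnorm2 : ∀ n, ‖q2 n‖ = ‖p n‖ := by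
    intro n
    have hcq : q2.coeff n = mu * p.coeff n := by
      simp only [hq2def, FormalMultilinearSeries.coeff, ContinuousMultilinearMap.smul_apply,
        smul_eq_mul]
    rw [FormalMultilinearSeries.norm_apply_eq_norm_coef,
      FormalMultilinearSeries.norm_apply_eq_norm_coef, hcq, norm_mul, hmu', one_mul]
  have hq1 : HasFPowerSeriesOnBall (fun z => h (lam * z)) q1 0 r := by
    refine ⟨le_trans hp.r_le (radius_le_of_norm_eq hnorm1), hp.r_pos, ?_⟩
    intro y hy
    have hy' : lam * y ∈ Metric.eball (0 : ℂ) (r : ENNReal) := by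
      rw [Metric.mem_eball, edist_zero_right, enorm_eq_nnnorm] at hy ⊢
      simpa [nnnorm_mul, nnnorm, hlam'] using hy
    have hs := hp.hasSum hy'
    simp only [zero_add] at hs ⊢
    have : (fun n => q1 n fun _ => y) = fun n => p n fun _ => lam * y := by
      funext n
      simp only [hq1def, ContinuousMultilinearMap.smul_apply,
        FormalMultilinearSeries.apply_eq_pow_smul_coeff, smul_eq_mul, mul_pow]
      ring
    rw [this]; exact hs
  have hq2 : HasFPowerSeriesOnBall (fun z => mu * h z) q2 0 r := by
    refine ⟨le_trans hp.r_le (radius_le_of_norm_eq hnorm2), hp.r_pos, ?_⟩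
    intro y hy
    have hs := (hp.hasSum hy).const_smul mu
    simp only [zero_add, smul_eq_mul] at hs ⊢
    have : (fun n => q2 n fun _ => y) = fun n => mu * (p n fun _ => y) := by
      funext n
      simp [hq2def, ContinuousMultilinearMap.smul_apply, smul_eq_mul]
    rw [this]; exact hs
  have hev : ∀ᶠ z in nhds (0 : ℂ), h (lam * z) = mu * h z := by
    filter_upwards [Metric.ball_mem_nhds (0 : ℂ) one_pos] with z hz
    exact heq z (by simpa [Complex.dist_eq] using hz)
  have hqq : q1 = q2 :=
    hq1.hasFPowerSeriesAt.eq_formalMultilinearSeries_of_eventually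
      hq2.hasFPowerSeriesAt hev
  have hcoeff : ∀ n, lam ^ n * p.coeff n = mu * p.coeff n := by
    intro n
    have := congrFun hqq n
    have := congrArg (fun m : ContinuousMultilinearMap ℂ (fun _ : Fin n => ℂ) ℂ =>
      m fun _ => (1 : ℂ)) this
    simpa [hq1def, hq2def, ContinuousMultilinearMap.smul_apply, smul_eq_mul,
      FormalMultilinearSeries.apply_eq_pow_smul_coeff] using this
  have hone : ∀ n, p.coeff n ≠ 0 → lam ^ n = mu := fun n hn =>
    mul_right_cancel₀ hn (hcoeff n)
  -- analyticity of h on the unit ball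
  have hopen : IsOpen {z : ℂ | ‖z‖ < 1} := by
    rw [hball]; exact Metric.isOpen_ball
  have hanaly : AnalyticOnNhd ℂ h {z : ℂ | ‖z‖ < 1} :=
    hdiff.analyticOnNhd hopen
  have hpre : IsPreconnected {z : ℂ | ‖z‖ < 1} := by
    rw [hball]; exact (convex_ball _ _).isPreconnected
  have h0mem : (0 : ℂ) ∈ {z : ℂ | ‖z‖ < 1} := by simp
  -- identity principle helper
  have hident : ∀ g : ℂ → ℂ, Differentiable ℂ g →
      (∀ z : ℂ, ‖z‖ < (r : ℝ) → h z = g z) →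
      ∀ z : ℂ, ‖z‖ < 1 → h z = g z := by
    intro g hg hsm z hz
    have hganaly : AnalyticOnNhd ℂ g {z : ℂ | ‖z‖ < 1} :=
      hg.differentiableOn.analyticOnNhd hopen
    have hev2 : h =ᶠ[nhds (0 : ℂ)] g := by
      filter_upwards [Metric.ball_mem_nhds (0 : ℂ) (by norm_num [hr] :
        (0 : ℝ) < (r : ℝ))] with w hw
      exact hsm w (by simpa [Complex.dist_eq] using hw)
    exact AnalyticOnNhd.eqOn_of_preconnected_of_eventuallyEq hanaly hganaly hpre h0mem hev2 hz
  -- existence of a nonzero coefficient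
  have hex : ∃ n, p.coeff n ≠ 0 := by
    by_contra hall
    push_neg at hall
    apply hnz
    refine hident (fun _ => 0) (by fun_prop) ?_
    intro z hz
    have hs := hp.hasSum (hmem z hz)
    simp only [zero_add] at hs
    have hz0 : (fun n => p n fun _ => z) = fun _ => (0 : ℂ) := by
      funext n
      rw [FormalMultilinearSeries.apply_eq_pow_smul_coeff, hall n, smul_zero]
    rw [hz0] at hs
    exact (hs.unique hasSum_zero)
  obtain ⟨n₀, hn₀⟩ := hex
  -- uniqueness of the nonzero coefficient
  have huniq : ∀ m, p.coeff m ≠ 0 → m = n₀ := by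
    intro m hm
    by_contra hmn
    have h1 := hone m hm
    have h2 := hone n₀ hn₀
    have hlamne : lam ≠ 0 := by
      intro hc; rw [hc] at hlam; simp at hlam
    rcases lt_or_gt_of_ne hmn with hlt | hlt
    · have : lam ^ (n₀ - m) = 1 := by
        have := h2.trans h1.symm
        rw [← Nat.sub_add_cancel hlt.le, pow_add] at this
        field_simp at this
        exact this
      exact hroot _ (Nat.sub_pos_of_lt hlt) this
    · have : lam ^ (m - n₀) = 1 := by
        have := h1.trans h2.symm
        rw [← Nat.sub_add_cancel hlt.le, pow_add] at this
        field_simp at this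
        exact this
      exact hroot _ (Nat.sub_pos_of_lt hlt) this
  -- n₀ > 0
  have hc0 : p.coeff 0 = 0 := by
    have := hp.coeff_zero (fun _ => (1 : ℂ))
    rwa [h0] at this
  have hn₀pos : 0 < n₀ := by
    rcases Nat.eq_zero_or_pos n₀ with h' | h'
    · exact absurd (h' ▸ hn₀) (by simp [h' ▸ hc0, hc0])
    · exact h'
  refine ⟨n₀, p.coeff n₀, hn₀pos, hn₀, ?_⟩
  refine hident (fun z => p.coeff n₀ * z ^ n₀) (by fun_prop) ?_
  intro z hz
  have hs := hp.hasSum (hmem z hz)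
  simp only [zero_add] at hs
  have hsingle : HasSum (fun n => p n fun _ => z) (p n₀ fun _ => z) := by
    refine hasSum_single n₀ fun m hm => ?_
    rw [FormalMultilinearSeries.apply_eq_pow_smul_coeff]
    rcases eq_or_ne (p.coeff m) 0 with hc | hc
    · rw [hc, smul_zero]
    · exact absurd (huniq m hc) hm
  have := hs.unique hsingle
  rw [this, FormalMultilinearSeries.apply_eq_pow_smul_coeff, smul_eq_mul]
  ring
end

section
/- Let H : ℍ → ℍ be holomorphic, α > 1 a real number, b a real number, and A a complex number such that H(αw + ib) = αH(w) + A for all w ∈ ℍ. If the angular limit c = ∠lim_{w→∞} H(w)/w exists in [0,∞), then H(w) = cw + (cb/(α-1))i - A/(α-1) for all w ∈ ℍ, and consequently Re A ≤ 0. -/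
open Complex Filter

theorem affine_functional_equation_rigidity (H : ℂ → ℂ)
    (hdiff : DifferentiableOn ℂ H {w : ℂ | 0 < w.re})
    (hmaps : ∀ w : ℂ, 0 < w.re → 0 < (H w).re)
    (α : ℝ) (hα : 1 < α) (b : ℝ) (A : ℂ)
    (heq : ∀ w : ℂ, 0 < w.re → H ((α : ℂ) * w + (b : ℂ) * Complex.I)
      = (α : ℂ) * H w + A)
    (c : ℝ) (hc : 0 ≤ c)
    (hlim : ∀ u : ℕ → ℂ, (∀ n, 0 < (u n).re) →
      (∃ M : ℝ, ∀ n, |(u n).im| ≤ M * (u n).re) →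
      Tendsto (fun n => ‖u n‖) atTop atTop →
      Tendsto (fun n => H (u n) / u n) atTop (nhds (c : ℂ))) :
    (∀ w : ℂ, 0 < w.re →
        H w = (c : ℂ) * w + ((c : ℂ) * b / ((α : ℂ) - 1)) * Complex.I - A / ((α : ℂ) - 1)) ∧
      A.re ≤ 0 := by
  have hα0 : (0:ℝ) < α := by linarith
  have hα1R : (0:ℝ) < α - 1 := by linarith
  have h1αR : (1:ℝ) - α ≠ 0 := by linarith
  have hαC : ((α:ℂ)) ≠ 0 := by exact_mod_cast hα0.ne'
  have hα1 : (α:ℂ) - 1 ≠ 0 := by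
    have : ((α - 1 : ℝ) : ℂ) ≠ 0 := by exact_mod_cast hα1R.ne'
    push_cast at this
    exact this
  have h1α : (1:ℂ) - (α:ℂ) ≠ 0 := by
    have : ((1 - α : ℝ) : ℂ) ≠ 0 := by exact_mod_cast h1αR
    push_cast at this
    exact this
  set e : ℝ := b / (1 - α) with he
  set d : ℂ := (e : ℂ) * Complex.I with hd
  have hfix : (α:ℂ) * d + (b:ℂ) * Complex.I = d := by
    rw [hd, he]
    push_cast
    field_simp
    ring
  have hdre : d.re = 0 := by simp [hd]
  have hdim : d.im = e := by simp [hd]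
  have main : ∀ w : ℂ, 0 < w.re →
      H w = (c : ℂ) * w + ((c : ℂ) * b / ((α : ℂ) - 1)) * Complex.I - A / ((α : ℂ) - 1) := by
    intro w hw
    set u : ℕ → ℂ := fun n => (α:ℂ)^n * (w - d) + d with hu
    have hre : ∀ n, (u n).re = α^n * w.re := by
      intro n
      simp [hu, ← Complex.ofReal_pow, Complex.mul_re, hdre]
    have him : ∀ n, (u n).im = α^n * (w.im - e) + e := by
      intro n
      simp [hu, ← Complex.ofReal_pow, Complex.mul_im, hdre, hdim]
    have hupos : ∀ n, 0 < (u n).re := by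
      intro n
      rw [hre]
      positivity
    have hstep : ∀ n, u (n+1) = (α:ℂ) * u n + (b:ℂ) * Complex.I := by
      intro n
      simp only [hu]
      rw [pow_succ]
      linear_combination -hfix
    have hH : ∀ n, H (u n) = (α:ℂ)^n * H w + A * ((α:ℂ)^n - 1) / ((α:ℂ) - 1) := by
      intro n
      induction n with
      | zero => simp [hu]
      | succ n ih =>
        rw [hstep n, heq (u n) (hupos n), ih]
        field_simp
        ring
    -- set up the limit
    have hwdre : (w - d).re = w.re := by simp [hdre]
    have hwd : w - d ≠ 0 := by
      intro h
      rw [h] at hwdre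
      simp at hwdre
      rw [← hwdre] at hw
      exact lt_irrefl _ hw
    have hr : Tendsto (fun n => ((α:ℂ)⁻¹)^n) atTop (nhds 0) := by
      apply tendsto_pow_atTop_nhds_zero_of_norm_lt_one
      rw [norm_inv]
      have : ‖((α:ℝ):ℂ)‖ = |α| := Complex.norm_real α
      rw [this, abs_of_pos hα0]
      exact inv_lt_one_of_one_lt₀ hα
    have hquot : ∀ n, H (u n) / u n
        = (H w + A/((α:ℂ)-1) - (A/((α:ℂ)-1)) * ((α:ℂ)⁻¹)^n)
          / ((w - d) + d * ((α:ℂ)⁻¹)^n) := by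
      intro n
      have hpn : ((α:ℂ))^n ≠ 0 := pow_ne_zero _ hαC
      have hipn : ((α:ℂ)⁻¹)^n ≠ 0 := pow_ne_zero _ (inv_ne_zero hαC)
      have hnum : H w + A/((α:ℂ)-1) - (A/((α:ℂ)-1)) * ((α:ℂ)⁻¹)^n
          = H (u n) * ((α:ℂ)⁻¹)^n := by
        rw [hH n, inv_pow]
        field_simp
        ring
      have hden : (w - d) + d * ((α:ℂ)⁻¹)^n = u n * ((α:ℂ)⁻¹)^n := by
        simp only [hu, inv_pow]
        field_simp
      rw [hnum, hden, mul_div_mul_right _ _ hipn]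
    have hlim2 : Tendsto (fun n => H (u n) / u n) atTop
        (nhds ((H w + A/((α:ℂ)-1)) / (w - d))) := by
      simp_rw [hquot]
      have hnum : Tendsto (fun n => H w + A/((α:ℂ)-1) - (A/((α:ℂ)-1)) * ((α:ℂ)⁻¹)^n)
          atTop (nhds (H w + A/((α:ℂ)-1))) := by
        have := tendsto_const_nhds (x := H w + A/((α:ℂ)-1)) (f := atTop (α := ℕ))
        simpa using this.sub (hr.const_mul (A/((α:ℂ)-1)))
      have hden : Tendsto (fun n => (w - d) + d * ((α:ℂ)⁻¹)^n) atTop (nhds (w - d)) := by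
        have := tendsto_const_nhds (x := w - d) (f := atTop (α := ℕ))
        simpa using this.add (hr.const_mul d)
      exact hnum.div hden hwd
    -- verify angular conditions
    have hM : ∃ M : ℝ, ∀ n, |(u n).im| ≤ M * (u n).re := by
      refine ⟨(|w.im| + 2 * |e|) / w.re, fun n => ?_⟩
      rw [him, hre]
      have h1 : (1:ℝ) ≤ α^n := one_le_pow₀ hα.le
      have hpow : (0:ℝ) < α^n := pow_pos hα0 n
      have habs : |α^n * (w.im - e) + e| ≤ α^n * |w.im - e| + |e| := by
        calc |α^n * (w.im - e) + e| ≤ |α^n * (w.im - e)| + |e| := abs_add_le _ _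
          _ = α^n * |w.im - e| + |e| := by rw [abs_mul, abs_of_pos hpow]
      have hsub : |w.im - e| ≤ |w.im| + |e| := abs_sub _ _
      have hMeq : (|w.im| + 2 * |e|) / w.re * (α^n * w.re) = α^n * (|w.im| + 2 * |e|) := by
        field_simp
      rw [hMeq]
      nlinarith [abs_nonneg e, abs_nonneg w.im, abs_nonneg (w.im - e)]
    have habsu : Tendsto (fun n => ‖u n‖) atTop atTop := by
      apply tendsto_atTop_mono (f := fun n => α^n * w.re)
      · intro n
        rw [← hre]
        exact (Complex.re_le_norm (u n))
      · exact (tendsto_pow_atTop_atTop_of_one_lt hα).atTop_mul_const hw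
    have hlim1 := hlim u hupos hM habsu
    have hceq : (c:ℂ) = (H w + A/((α:ℂ)-1)) / (w - d) :=
      tendsto_nhds_unique hlim1 hlim2
    rw [eq_div_iff hwd] at hceq
    have hHw : H w = (c:ℂ) * (w - d) - A/((α:ℂ)-1) := by linear_combination -hceq
    rw [hHw, hd, he]
    push_cast
    field_simp
    ring
  refine ⟨main, ?_⟩
  -- Re A ≤ 0
  have key : ∀ ε : ℝ, 0 < ε → 0 < c * ε - A.re / (α - 1) := by
    intro ε hε
    have hεre : (0:ℝ) < ((ε:ℂ)).re := by simpa using hε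
    have h := hmaps (ε:ℂ) hεre
    rw [main (ε:ℂ) hεre] at h
    have hterm1 : ((c:ℂ) * (ε:ℂ)).re = c * ε := by
      rw [← Complex.ofReal_mul]
      exact Complex.ofReal_re _
    have hterm2 : (((c:ℂ) * (b:ℂ) / ((α:ℂ) - 1)) * Complex.I).re = 0 := by
      have hcb : (c:ℂ) * (b:ℂ) / ((α:ℂ) - 1) = ((c * b / (α - 1) : ℝ) : ℂ) := by
        push_cast
        ring
      rw [Complex.mul_I_re, hcb, Complex.ofReal_im, neg_zero]
    have hterm3 : (A / ((α:ℂ) - 1)).re = A.re / (α - 1) := by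
      have hcast : ((α:ℂ) - 1) = ((α - 1 : ℝ) : ℂ) := by push_cast; ring
      rw [hcast, Complex.div_ofReal_re]
    have hrw : ((c:ℂ) * (ε:ℂ) + ((c:ℂ) * b / ((α:ℂ) - 1)) * Complex.I - A / ((α:ℂ) - 1)).re
        = c * ε - A.re / (α - 1) := by
      rw [Complex.sub_re, Complex.add_re, hterm1, hterm2, hterm3, add_zero]
    rw [hrw] at h
    exact h
  by_contra hA
  push_neg at hA
  have hK : 0 < A.re / (α - 1) := div_pos hA hα1R
  set ε : ℝ := (A.re / (α - 1)) / (c + 1) with hε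
  have hεpos : 0 < ε := div_pos hK (by linarith)
  have h2 := key ε hεpos
  have h3 : (c + 1) * ε = A.re / (α - 1) := by
    rw [hε]
    field_simp
  nlinarith
end

section
/- Let g : ℍ → ℍ be holomorphic and suppose g(w + a) = g(w) for all w ∈ ℍ, where a is a complex number with Re a > 0. If the angular limit ∠lim_{w→∞} g(w) exists in the extended plane, then g is constant. -/
open Complex Filter

theorem periodic_with_angular_limit_constant (g : ℂ → ℂ)
    (hdiff : DifferentiableOn ℂ g {w : ℂ | 0 < w.re})
    (hmaps : ∀ w : ℂ, 0 < w.re → 0 < (g w).re)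
    (a : ℂ) (ha : 0 < a.re)
    (heq : ∀ w : ℂ, 0 < w.re → g (w + a) = g w)
    (hlim :
      (∃ L : ℂ, ∀ u : ℕ → ℂ, (∀ n, 0 < (u n).re) →
          (∃ M : ℝ, ∀ n, |(u n).im| ≤ M * (u n).re) →
          Tendsto (fun n => ‖u n‖) atTop atTop →
          Tendsto (fun n => g (u n)) atTop (nhds L)) ∨
        (∀ u : ℕ → ℂ, (∀ n, 0 < (u n).re) →
          (∃ M : ℝ, ∀ n, |(u n).im| ≤ M * (u n).re) →
          Tendsto (fun n => ‖u n‖) atTop atTop →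
          Tendsto (fun n => ‖g (u n)‖) atTop atTop)) :
    ∀ w w' : ℂ, 0 < w.re → 0 < w'.re → g w = g w' := by
  -- For any w with positive real part, the sequence u n = w + n•a has the three properties,
  -- and g is constant equal to g w along it.
  have hre : ∀ (w : ℂ), 0 < w.re → ∀ n : ℕ, 0 < (w + n * a).re := by
    intro w hw n
    simp only [add_re, mul_re, natCast_re, natCast_im, zero_mul, sub_zero]
    positivity
  have hconst : ∀ (w : ℂ), 0 < w.re → ∀ n : ℕ, g (w + n * a) = g w := by
    intro w hw n
    induction n with
    | zero => simp
    | succ n ih =>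
        have : (w + (n + 1 : ℕ) * a) = (w + n * a) + a := by push_cast; ring
        rw [this, heq _ (hre w hw n), ih]
  have hM : ∀ (w : ℂ), 0 < w.re → ∃ M : ℝ, ∀ n : ℕ, |(w + n * a).im| ≤ M * (w + n * a).re := by
    intro w hw
    refine ⟨max (|w.im| / w.re) (|a.im| / a.re), fun n => ?_⟩
    set M := max (|w.im| / w.re) (|a.im| / a.re) with hMdef
    have h1 : |w.im| ≤ M * w.re := by
      rw [← div_le_iff₀ hw]; exact le_max_left _ _
    have h2 : |a.im| ≤ M * a.re := by
      rw [← div_le_iff₀ ha]; exact le_max_right _ _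
    have : (w + n * a).im = w.im + n * a.im := by
      simp [mul_im]
    rw [this]
    have hre' : (w + n * a).re = w.re + n * a.re := by
      simp [mul_re]
    rw [hre', mul_add]
    calc |w.im + n * a.im| ≤ |w.im| + n * |a.im| := by
          refine (abs_add_le _ _).trans ?_
          gcongr
          rw [abs_mul, Nat.abs_cast]
      _ ≤ M * w.re + M * (n * a.re) := by
          refine add_le_add h1 ?_
          calc (n : ℝ) * |a.im| ≤ n * (M * a.re) := by gcongr
            _ = M * (n * a.re) := by ring
  have habs : ∀ (w : ℂ), 0 < w.re →
      Tendsto (fun n : ℕ => ‖w + n * a‖) atTop atTop := by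
    intro w hw
    have h1 : Tendsto (fun n : ℕ => w.re + n * a.re) atTop atTop :=
      tendsto_atTop_add_const_left _ _
        (tendsto_natCast_atTop_atTop.atTop_mul_const ha)
    refine tendsto_atTop_mono (fun n => ?_) h1
    have : w.re + n * a.re = (w + n * a).re := by simp [mul_re]
    rw [this]
    exact (Complex.re_le_norm _)
  intro w w' hw hw'
  rcases hlim with ⟨L, hL⟩ | hdiv
  · have k1 : Tendsto (fun n : ℕ => g (w + n * a)) atTop (nhds L) :=
      hL _ (hre w hw) (hM w hw) (habs w hw)
    have k2 : Tendsto (fun n : ℕ => g (w' + n * a)) atTop (nhds L) :=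
      hL _ (hre w' hw') (hM w' hw') (habs w' hw')
    have e1 : g w = L := by
      have : Tendsto (fun _ : ℕ => g w) atTop (nhds L) := by
        refine k1.congr fun n => hconst w hw n
      exact tendsto_nhds_unique tendsto_const_nhds this
    have e2 : g w' = L := by
      have : Tendsto (fun _ : ℕ => g w') atTop (nhds L) := by
        refine k2.congr fun n => hconst w' hw' n
      exact tendsto_nhds_unique tendsto_const_nhds this
    rw [e1, e2]
  · exfalso
    have k1 : Tendsto (fun n : ℕ => ‖g (w + n * a)‖) atTop atTop :=
      hdiv _ (hre w hw) (hM w hw) (habs w hw)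
    have k2 : Tendsto (fun _ : ℕ => ‖g w‖) atTop atTop :=
      k1.congr fun n => by rw [hconst w hw n]
    exact not_tendsto_atTop_of_tendsto_nhds (tendsto_const_nhds) k2
end

section
/- Define f(z) = (1/2)·exp(-π²/log 2)·exp((2πi/log 2)·Log(1/(1-z))) for z ∈ 𝔻, where Log is the principal branch of the logarithm, and φ(z) = (1+z)/2. Then f maps 𝔻 into 𝔻 and f ∘ φ = f on 𝔻. -/
open Complex Real

theorem example_invariant_under_hyperbolic :
    let f : ℂ → ℂ := fun z =>
      (1 / 2) * Complex.exp (-(Real.pi ^ 2 : ℂ) / (Real.log 2 : ℂ)) *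
        Complex.exp ((2 * (Real.pi : ℂ) * Complex.I / (Real.log 2 : ℂ)) *
          Complex.log (1 / (1 - z)))
    ∀ z : ℂ, ‖z‖ < 1 →
      ‖f z‖ < 1 ∧ f ((1 + z) / 2) = f z := by
  intro f z hz
  have hl2 : (0:ℝ) < Real.log 2 := Real.log_pos one_lt_two
  have hpi : (0:ℝ) < Real.pi := Real.pi_pos
  have hz1 : (1:ℂ) - z ≠ 0 := by
    intro h
    have : z = 1 := by linear_combination -h
    simp [this] at hz
  set w : ℂ := 1 / (1 - z) with hw
  have hw0 : w ≠ 0 := one_div_ne_zero hz1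
  have hwre : 0 < w.re := by
    rw [hw, one_div, Complex.inv_re]
    apply div_pos
    · have h1 : z.re < 1 := lt_of_le_of_lt (Complex.re_le_norm z) hz
      simpa [Complex.sub_re] using sub_pos.mpr h1
    · exact Complex.normSq_pos.mpr hz1
  have harg : |w.arg| < Real.pi / 2 := Complex.abs_arg_lt_pi_div_two_iff.mpr (Or.inl hwre)
  constructor
  · have hre1 : (-(Real.pi ^ 2 : ℂ) / (Real.log 2 : ℂ)).re = -(Real.pi ^ 2) / Real.log 2 := by
      rw [show -(Real.pi ^ 2 : ℂ) / (Real.log 2 : ℂ) = ((-(Real.pi^2) / Real.log 2 : ℝ) : ℂ) by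
        push_cast; ring]
      exact Complex.ofReal_re _
    have hre2 : ((2 * (Real.pi : ℂ) * Complex.I / (Real.log 2 : ℂ)) * Complex.log w).re
        = (2 * Real.pi / Real.log 2) * (-(w.arg)) := by
      rw [show (2 * (Real.pi : ℂ) * Complex.I / (Real.log 2 : ℂ)) * Complex.log w
          = ((2 * Real.pi / Real.log 2 : ℝ) : ℂ) * (Complex.I * Complex.log w) by
        push_cast; ring]
      rw [Complex.re_ofReal_mul, Complex.I_mul_re, Complex.log_im]
    have habs : ‖f z‖
        = (1/2) * (Real.exp (-(Real.pi ^ 2) / Real.log 2) *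
            Real.exp ((2 * Real.pi / Real.log 2) * (-(w.arg)))) := by
      simp only [f, ← hw, norm_mul, Complex.norm_exp, hre1, hre2, norm_div, norm_one,
        Complex.norm_two]
      norm_num
      ring
    rw [habs, ← Real.exp_add]
    have hexp : -(Real.pi ^ 2) / Real.log 2 + (2 * Real.pi / Real.log 2) * (-(w.arg)) < 0 := by
      have h1 : -(Real.pi/2) < w.arg := (abs_lt.mp harg).1
      have h2 : (2 * Real.pi / Real.log 2) * (-(w.arg)) < (2 * Real.pi / Real.log 2) * (Real.pi/2) := by
        apply mul_lt_mul_of_pos_left _ (by positivity)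
        linarith
      have h3 : (2 * Real.pi / Real.log 2) * (Real.pi/2) = Real.pi^2 / Real.log 2 := by
        field_simp
      have h4 : -(Real.pi ^ 2) / Real.log 2 = -(Real.pi^2 / Real.log 2) := neg_div _ _
      linarith
    nlinarith [Real.exp_lt_one_iff.mpr hexp, Real.exp_pos (-(Real.pi ^ 2) / Real.log 2 + (2 * Real.pi / Real.log 2) * (-(w.arg)))]
  · have key : (1:ℂ) / (1 - (1 + z) / 2) = ((2:ℝ):ℂ) * w := by
      rw [hw]
      have h2 : (1:ℂ) - (1 + z)/2 = (1 - z)/2 := by ring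
      rw [h2]
      field_simp
      norm_num
    simp only [f, key, Complex.log_ofReal_mul (by norm_num : (0:ℝ) < 2) hw0, mul_add,
      Complex.exp_add]
    have hc : (2 * (Real.pi : ℂ) * Complex.I / (Real.log 2 : ℂ)) * ((Real.log 2 : ℝ) : ℂ)
        = 2 * (Real.pi : ℂ) * Complex.I := by
      rw [div_mul_cancel₀]
      exact_mod_cast ne_of_gt hl2
    rw [hc, Complex.exp_two_pi_mul_I]
    ring
end

section
/- Let f : 𝔻 → 𝔻 be holomorphic and non-constant, d ∈ ℂ with d ≠ 0 and |d| ≠ 1, and suppose f(z/d) = f(z)/d for all z ∈ 𝔻 where both sides are defined (taking |d| > 1 so z/d ∈ 𝔻). Then there is a nonzero constant a₁ with f(z) = a₁z for all z ∈ 𝔻; in particular f'(0) ≠ 0. -/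
open Complex

theorem commuting_with_linear_map_is_linear (f : ℂ → ℂ)
    (hf : DifferentiableOn ℂ f {z : ℂ | ‖z‖ < 1})
    (hmaps : ∀ z : ℂ, ‖z‖ < 1 → ‖f z‖ < 1)
    (hnc : ¬ ∃ w : ℂ, ∀ z : ℂ, ‖z‖ < 1 → f z = w)
    (d : ℂ) (hd0 : d ≠ 0) (hd1 : 1 < ‖d‖)
    (heq : ∀ z : ℂ, ‖z‖ < 1 → f (z / d) = f z / d) :
    ∃ a₁ : ℂ, a₁ ≠ 0 ∧ (∀ z : ℂ, ‖z‖ < 1 → f z = a₁ * z) ∧ deriv f 0 ≠ 0 := by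
  have hopen : IsOpen {z : ℂ | ‖z‖ < 1} := by
    simpa using isOpen_lt continuous_norm continuous_const
  have h0mem : (0 : ℂ) ∈ {z : ℂ | ‖z‖ < 1} := by simp
  have hdiff : DifferentiableAt ℂ f 0 := hf.differentiableAt (hopen.mem_nhds h0mem)
  have hd1' : d ≠ 1 := by
    intro h; rw [h] at hd1; simp at hd1
  have hf0 : f 0 = 0 := by
    have h := heq 0 (by simp)
    rw [zero_div] at h
    have h2 : f 0 * (d - 1) = 0 := by
      have h3 : f 0 * d = f 0 := by rw [eq_div_iff hd0] at h; linear_combination h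
      linear_combination h3
    rcases mul_eq_zero.mp h2 with h | h
    · exact h
    · exact absurd (sub_eq_zero.mp h) hd1'
  -- iterate the relation
  have hiter : ∀ (z : ℂ), ‖z‖ < 1 → ∀ n : ℕ, f (z / d ^ n) = f z / d ^ n := by
    intro z hz n
    induction n with
    | zero => simp
    | succ n ih =>
      have hzn : ‖z / d ^ n‖ < 1 := by
        rw [norm_div, norm_pow]
        have h1 : (1 : ℝ) ≤ ‖d‖ ^ n := one_le_pow₀ hd1.le
        calc ‖z‖ / ‖d‖ ^ n ≤ ‖z‖ / 1 :=
              div_le_div_of_nonneg_left (by positivity) one_pos h1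
          _ < 1 := by simpa using hz
      have := heq (z / d ^ n) hzn
      rw [div_div, ← pow_succ] at this
      rw [this, ih, div_div, ← pow_succ]
  set a₁ := deriv f 0 with ha₁
  have hderiv : HasDerivAt f a₁ 0 := hdiff.hasDerivAt
  have hslope := hasDerivAt_iff_tendsto_slope.mp hderiv
  have key : ∀ z : ℂ, ‖z‖ < 1 → f z = a₁ * z := by
    intro z hz
    rcases eq_or_ne z 0 with rfl | hz0
    · simp [hf0]
    -- z / d^n → 0 within {0}ᶜ
    have htend : Filter.Tendsto (fun n : ℕ => z / d ^ n) Filter.atTop (nhdsWithin 0 {0}ᶜ) := by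
      apply tendsto_nhdsWithin_of_tendsto_nhds_of_eventually_within
      · have : Filter.Tendsto (fun n : ℕ => (d⁻¹) ^ n) Filter.atTop (nhds 0) := by
          apply tendsto_pow_atTop_nhds_zero_of_norm_lt_one
          rw [norm_inv]
          exact inv_lt_one_of_one_lt₀ (by simpa using hd1)
        have := this.const_mul z
        simpa [div_eq_mul_inv, inv_pow] using this
      · filter_upwards with n
        simp only [Set.mem_compl_iff, Set.mem_singleton_iff]
        exact div_ne_zero hz0 (pow_ne_zero n hd0)
    have hcomp := hslope.comp htend
    have hconst : ∀ n : ℕ, slope f 0 (z / d ^ n) = f z / z := by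
      intro n
      rw [slope_def_field, hiter z hz n, hf0]
      field_simp
      simp [hz0]
    have hcomp' : Filter.Tendsto (fun _ : ℕ => f z / z) Filter.atTop (nhds a₁) :=
      hcomp.congr fun n => hconst n
    have := tendsto_nhds_unique hcomp' tendsto_const_nhds
    rw [this, div_mul_cancel₀ _ hz0]
  have ha₁0 : a₁ ≠ 0 := by
    intro h
    apply hnc
    exact ⟨0, fun z hz => by rw [key z hz, h, zero_mul]⟩
  exact ⟨a₁, ha₁0, key, ha₁0⟩
end
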